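/- Under Assumptions A1 and A2, let (x̄, ȳ, λ̄) be an optimal primal–dual pair of the RMP, let ρ ≥ 1, and suppose for each session s: γ(s,λ̄) > 0, (1/ρ)·γ_ρ(s,λ̄) ≤ γ(s,λ̄) ≤ γ_ρ(s,λ̄), and γ_ρ(s,λ̄) = γ'(s,λ̄) (the condition satisfied at convergence of column generation with ρ-approximate tree scheduling). Assume also x̄_s > m_s for all s (Assumption A3) and U_s(m_s) − m_s·U_s'(m_s) ≥ 0 for all s (Assumption A4). Then θ'(λ̄) ≤ Σ_s U_s(x_s*) ≤ θ(ρ·λ̄) ≤ ρ·θ'(λ̄), where Σ_s U_s(x_s*) = f* is the optimal value of the MP. -/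

import Mathlib

open scoped BigOperators

/-- the performance bound of imperfect global tree scheduling:
θ'(λ̄) ≤ f* ≤ θ(ρλ̄) ≤ ρ·θ'(λ̄). -/
lemma group_sum' {S T : Type} [Fintype S] [Fintype T] [DecidableEq S]
    (σ : T → S) (y : T → ℝ) (g : S → ℝ) :
    ∑ t, y t * g (σ t) = ∑ s, (∑ t, if σ t = s then y t else 0) * g s := by
  have h : ∀ t, y t * g (σ t) = ∑ s, if σ t = s then y t * g s else 0 := by
    intro t; rw [Finset.sum_ite_eq]; simp
  simp_rw [h]
  rw [Finset.sum_comm]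
  refine Finset.sum_congr rfl fun s _ => ?_
  rw [Finset.sum_mul]
  exact Finset.sum_congr rfl fun t _ => by split_ifs <;> simp


theorem imperfect_tree_scheduling_bound
    {S T E : Type} [Fintype S] [Fintype T] [Fintype E]
    [Nonempty S] [Nonempty T] [Nonempty E] [DecidableEq S] [DecidableEq T]
    (σ : T → S) (hσ : Function.Surjective σ)
    (H : E → T → ℝ) (hH : ∀ e t, H e t = 0 ∨ H e t = 1)
    (c : E → ℝ) (hc : ∀ e, 0 < c e)
    (m M : S → ℝ) (hm : ∀ s, 0 ≤ m s) (hmM : ∀ s, m s < M s)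
    (U : S → ℝ → ℝ)
    -- Assumption A1
    (hUmono : ∀ s, MonotoneOn (U s) (Set.Icc (m s) (M s)))
    (hUconc : ∀ s, StrictConcaveOn ℝ (Set.Icc (m s) (M s)) (U s))
    (hUdiff : ∀ s, ContDiffOn ℝ 1 (U s) (Set.Icc (m s) (M s)))
    -- the domain D
    (D : Set ((S → ℝ) × (T → ℝ)))
    (hD : D = {p | (∀ t, 0 ≤ p.2 t) ∧
      (∀ s, p.1 s = ∑ t, if σ t = s then p.2 t else 0) ∧
      (∀ s, p.1 s ∈ Set.Icc (m s) (M s))})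
    -- the Lagrangian
    (L : (S → ℝ) → (T → ℝ) → (E → ℝ) → ℝ)
    (hL : ∀ x y lam, L x y lam =
      ∑ s, U s (x s) + ∑ e, lam e * (c e - ∑ t, H e t * y t))
    -- the optimal value of the master problem
    (fStar : ℝ)
    (hfStar : IsGreatest {v | ∃ p ∈ D, (∀ e, ∑ t, H e t * p.2 t ≤ c e) ∧
      v = ∑ s, U s (p.1 s)} fStar)
    -- the dual function
    (θ : (E → ℝ) → ℝ)
    (hθ : ∀ lam : E → ℝ, IsGreatest {v | ∃ p ∈ D, v = L p.1 p.2 lam} (θ lam))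
    -- Assumption A2 (Slater)
    (hslater : ∃ p ∈ D, ∀ e, ∑ t, H e t * p.2 t < c e)
    -- the restricted tree set T', containing at least one tree of every session
    (T' : Finset T) (hT' : ∀ s, ∃ t ∈ T', σ t = s)
    -- the domain D' of the restricted master problem
    (D' : Set ((S → ℝ) × (T → ℝ)))
    (hD' : D' = {p | p ∈ D ∧ ∀ t ∉ T', p.2 t = 0})
    -- the dual function of the RMP
    (θ' : (E → ℝ) → ℝ)
    (hθ' : ∀ lam : E → ℝ, IsGreatest {v | ∃ p ∈ D', v = L p.1 p.2 lam} (θ' lam))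
    -- Assumption A2 (Slater) for the RMP
    (hslater' : ∃ p ∈ D', ∀ e, ∑ t, H e t * p.2 t < c e)
    -- (x̄, ȳ, λ̄) is an optimal primal–dual pair of the RMP
    (xbar : S → ℝ) (ybar : T → ℝ) (lambar : E → ℝ)
    (hlambar_nonneg : ∀ e, 0 ≤ lambar e)
    (hlambar_min : ∀ μ : E → ℝ, (∀ e, 0 ≤ μ e) → θ' lambar ≤ θ' μ)
    (hbar_feas : (xbar, ybar) ∈ D' ∧ ∀ e, ∑ t, H e t * ybar t ≤ c e)
    (hbar_opt : ∀ p ∈ D', (∀ e, ∑ t, H e t * p.2 t ≤ c e) →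
      ∑ s, U s (p.1 s) ≤ ∑ s, U s (xbar s))
    (hduality : ∑ s, U s (xbar s) = θ' lambar)
    -- the global and local minimum tree costs under λ̄
    (γbar γ'bar : S → ℝ)
    (hγbar : ∀ s, IsLeast {w | ∃ t, σ t = s ∧ w = ∑ e, H e t * lambar e} (γbar s))
    (hγ'bar : ∀ s,
      IsLeast {w | ∃ t ∈ T', σ t = s ∧ w = ∑ e, H e t * lambar e} (γ'bar s))
    -- the approximation ratio ρ and the ρ-approximate tree costs at λ̄
    (ρ : ℝ) (hρ : 1 ≤ ρ) (γρ : S → ℝ)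
    (hγpos : ∀ s, 0 < γbar s)
    (hγρ : ∀ s, (1 / ρ) * γρ s ≤ γbar s ∧ γbar s ≤ γρ s)
    -- the condition satisfied at convergence of column generation
    (hconv : ∀ s, γρ s = γ'bar s)
    -- Assumption A3
    (hA3 : ∀ s, m s < xbar s)
    -- Assumption A4
    (hA4 : ∀ s, 0 ≤ U s (m s) -
      m s * derivWithin (U s) (Set.Icc (m s) (M s)) (m s))
 :
    θ' lambar ≤ fStar ∧ fStar ≤ θ (fun e => ρ * lambar e) ∧
    θ (fun e => ρ * lambar e) ≤ ρ * θ' lambar := by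
  subst hD hD'
  have hρpos : (0:ℝ) < ρ := lt_of_lt_of_le one_pos hρ
  set cost : T → ℝ := fun t => ∑ e, H e t * lambar e with hcost
  set C : ℝ := ∑ e, lambar e * c e with hCdef
  -- Lagrangian value in terms of cost
  have hswap : ∀ (r : ℝ) (y : T → ℝ),
      ∑ e, r * lambar e * ∑ t, H e t * y t = r * ∑ t, y t * cost t := by
    intro r y
    rw [Finset.mul_sum]
    simp_rw [Finset.mul_sum]
    rw [Finset.sum_comm]
    refine Finset.sum_congr rfl fun t _ => ?_
    simp_rw [hcost, Finset.mul_sum]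
    refine Finset.sum_congr rfl fun e _ => by ring
  have hLval : ∀ (x : S → ℝ) (y : T → ℝ) (r : ℝ),
      L x y (fun e => r * lambar e) =
        ∑ s, U s (x s) + r * C - r * ∑ t, y t * cost t := by
    intro x y r
    rw [hL]
    have h1 : ∑ e, r * lambar e * (c e - ∑ t, H e t * y t)
        = ∑ e, r * lambar e * c e - ∑ e, r * lambar e * ∑ t, H e t * y t := by
      rw [← Finset.sum_sub_distrib]
      exact Finset.sum_congr rfl fun e _ => by ring
    rw [h1, hswap]
    have h2 : ∑ e, r * lambar e * c e = r * C := by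
      rw [hCdef, Finset.mul_sum]
      exact Finset.sum_congr rfl fun e _ => by ring
    rw [h2]; ring
  have hLval1 : ∀ (x : S → ℝ) (y : T → ℝ),
      L x y lambar = ∑ s, U s (x s) + C - ∑ t, y t * cost t := by
    intro x y
    have := hLval x y 1
    simp only [one_mul] at this
    exact this
  -- destructure feasibility of (xbar, ybar)
  obtain ⟨⟨hy0, hxsum, hxbnd⟩, hsupp⟩ := hbar_feas.1
  -- Part 1
  have hpart1 : θ' lambar ≤ fStar := by
    rw [← hduality]
    exact hfStar.2 ⟨(xbar, ybar), ⟨hy0, hxsum, hxbnd⟩, hbar_feas.2, rfl⟩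
  -- Part 2
  have hpart2 : fStar ≤ θ (fun e => ρ * lambar e) := by
    obtain ⟨p, hpD, hpcap, hpval⟩ := hfStar.1
    have hle : fStar ≤ L p.1 p.2 (fun e => ρ * lambar e) := by
      rw [hpval, hL]
      have h0 : 0 ≤ ∑ e, ρ * lambar e * (c e - ∑ t, H e t * p.2 t) :=
        Finset.sum_nonneg fun e _ =>
          mul_nonneg (mul_nonneg hρpos.le (hlambar_nonneg e))
            (sub_nonneg.2 (hpcap e))
      linarith
    exact hle.trans ((hθ _).2 ⟨p, hpD, rfl⟩)
  refine ⟨hpart1, hpart2, ?_⟩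
  -- choose min-cost trees in T'
  have htsall : ∀ s, ∃ t, t ∈ T' ∧ σ t = s ∧ γ'bar s = cost t := by
    intro s
    obtain ⟨t, ht, hts, hcst⟩ := (hγ'bar s).1
    exact ⟨t, ht, hts, hcst⟩
  choose ts hts1 hts2 hts3 using htsall
  -- key routing inequality
  have hroute : ∀ z : S → ℝ, (∀ s, z s ∈ Set.Icc (m s) (M s)) →
      ∑ s, U s (z s) + C - ∑ s, z s * γ'bar s ≤ θ' lambar := by
    intro z hz
    set yz : T → ℝ := fun t => ∑ s, if ts s = t then z s else 0 with hyzdef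
    have hyz0 : ∀ t, 0 ≤ yz t := fun t => Finset.sum_nonneg fun s _ => by
      split_ifs
      · exact le_trans (hm s) (hz s).1
      · exact le_rfl
    have hyzsupp : ∀ t ∉ T', yz t = 0 := fun t ht =>
      Finset.sum_eq_zero fun s _ => by
        rw [if_neg]; intro h; exact ht (h ▸ hts1 s)
    have hAyz : ∀ s, (∑ t, if σ t = s then yz t else 0) = z s := by
      intro s
      have h1 : ∀ t, (if σ t = s then yz t else 0)
          = ∑ s', if ts s' = t ∧ σ t = s then z s' else 0 := by
        intro t
        rw [hyzdef]
        split_ifs with h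
        · exact Finset.sum_congr rfl fun s' _ => by simp [h]
        · exact (Finset.sum_eq_zero fun s' _ => by simp [h]).symm
      simp_rw [h1]
      rw [Finset.sum_comm]
      have h2 : ∀ s', (∑ t, if ts s' = t ∧ σ t = s then z s' else 0)
          = if s' = s then z s' else 0 := by
        intro s'
        rw [Finset.sum_eq_single (ts s')]
        · simp [hts2 s']
        · intro t _ hne
          rw [if_neg]
          intro hcon
          exact hne hcon.1.symm
        · simp
      simp_rw [h2]
      rw [Finset.sum_ite_eq']
      simp
    have hcostyz : ∑ t, yz t * cost t = ∑ s, z s * γ'bar s := by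
      have h1 : ∀ t, yz t * cost t = ∑ s, if ts s = t then z s * cost t else 0 := by
        intro t
        rw [hyzdef, Finset.sum_mul]
        exact Finset.sum_congr rfl fun s _ => by split_ifs <;> simp
      simp_rw [h1]
      rw [Finset.sum_comm]
      refine Finset.sum_congr rfl fun s _ => ?_
      rw [Finset.sum_ite_eq]
      simp [hts3 s]
    have hmem : ((z, yz) : (S → ℝ) × (T → ℝ)) ∈
        {p : (S → ℝ) × (T → ℝ) | (p ∈ {p : (S → ℝ) × (T → ℝ) | (∀ t, 0 ≤ p.2 t) ∧
          (∀ s, p.1 s = ∑ t, if σ t = s then p.2 t else 0) ∧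
          (∀ s, p.1 s ∈ Set.Icc (m s) (M s))}) ∧ ∀ t ∉ T', p.2 t = 0} :=
      ⟨⟨hyz0, fun s => (hAyz s).symm, hz⟩, hyzsupp⟩
    have hub := (hθ' lambar).2 ⟨(z, yz), hmem, rfl⟩
    rw [hLval1, hcostyz] at hub
    exact hub
  -- complementary slackness: C = ∑ t, ybar t * cost t
  have hCroute : C = ∑ t, ybar t * cost t := by
    have hub : L xbar ybar lambar ≤ θ' lambar :=
      (hθ' lambar).2 ⟨(xbar, ybar), ⟨⟨hy0, hxsum, hxbnd⟩, hsupp⟩, rfl⟩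
    have hlb : ∑ s, U s (xbar s) ≤ L xbar ybar lambar := by
      rw [hL]
      have h0 : 0 ≤ ∑ e, lambar e * (c e - ∑ t, H e t * ybar t) :=
        Finset.sum_nonneg fun e _ =>
          mul_nonneg (hlambar_nonneg e) (sub_nonneg.2 (hbar_feas.2 e))
      linarith
    rw [hLval1] at hub hlb
    rw [← hduality] at hub
    linarith
  -- ∑ xbar * γ' ≤ ∑ ybar * cost
  have h1 : ∑ s, xbar s * γ'bar s ≤ ∑ t, ybar t * cost t := by
    have hgr : ∑ t, ybar t * γ'bar (σ t)
        = ∑ s, xbar s * γ'bar s := by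
      rw [group_sum' σ ybar γ'bar]
      exact Finset.sum_congr rfl fun s _ => by rw [← hxsum s]
    rw [← hgr]
    refine Finset.sum_le_sum fun t _ => ?_
    by_cases ht : t ∈ T'
    · exact mul_le_mul_of_nonneg_left ((hγ'bar (σ t)).2 ⟨t, ht, rfl, rfl⟩) (hy0 t)
    · have h0 : ybar t = 0 := hsupp t ht
      rw [h0, zero_mul, zero_mul]
  have h2 : C ≤ ∑ s, xbar s * γ'bar s := by
    have := hroute xbar hxbnd
    rw [← hduality] at this
    linarith
  have hCeq : C = ∑ s, xbar s * γ'bar s :=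
    le_antisymm h2 (hCroute ▸ h1)
  -- per-session optimality
  have hsess : ∀ s, ∀ w ∈ Set.Icc (m s) (M s),
      U s w - w * γ'bar s ≤ U s (xbar s) - xbar s * γ'bar s := by
    intro s0 w hw
    set z : S → ℝ := Function.update xbar s0 w with hzdef
    have hzb : ∀ s, z s ∈ Set.Icc (m s) (M s) := by
      intro s
      rcases eq_or_ne s s0 with h | h
      · subst h; simp [hzdef, Function.update_self]; exact hw
      · simp [hzdef, Function.update_of_ne h]; exact hxbnd s
    have hr := hroute z hzb
    rw [← hduality] at hr
    have hU : ∑ s, U s (z s) - ∑ s, U s (xbar s) = U s0 w - U s0 (xbar s0) := by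
      rw [← Finset.sum_sub_distrib]
      rw [Finset.sum_eq_single s0]
      · simp [hzdef, Function.update_self]
      · intro s _ hne
        simp [hzdef, Function.update_of_ne hne]
      · simp
    have hG : ∑ s, z s * γ'bar s - ∑ s, xbar s * γ'bar s
        = w * γ'bar s0 - xbar s0 * γ'bar s0 := by
      rw [← Finset.sum_sub_distrib]
      rw [Finset.sum_eq_single s0]
      · simp [hzdef, Function.update_self]
      · intro s _ hne
        simp [hzdef, Function.update_of_ne hne]
      · simp
    have hCx : C = ∑ s, xbar s * γ'bar s := hCeq
    linarith
  -- 0 ≤ U s (xbar s) - xbar s * γ' s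
  have hkey : ∀ s, 0 ≤ U s (xbar s) - xbar s * γ'bar s := by
    intro s
    have hmm : m s ∈ Set.Icc (m s) (M s) := ⟨le_rfl, (hmM s).le⟩
    have hxI : xbar s ∈ Set.Icc (m s) (M s) := hxbnd s
    have hsm := hsess s (m s) hmm
    have hxm : (0:ℝ) < xbar s - m s := by linarith [hA3 s]
    have hslope : γ'bar s ≤ (U s (xbar s) - U s (m s)) / (xbar s - m s) := by
      rw [le_div_iff₀ hxm]
      linarith
    have hdw : (U s (xbar s) - U s (m s)) / (xbar s - m s)
        ≤ derivWithin (U s) (Set.Icc (m s) (M s)) (m s) := by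
      have hsl := (hUconc s).concaveOn.slope_le_derivWithin hmm hxI (hA3 s)
        (((hUdiff s).differentiableOn one_ne_zero) (m s) hmm)
      rwa [slope_def_field] at hsl
    have hmd : m s * γ'bar s
        ≤ m s * derivWithin (U s) (Set.Icc (m s) (M s)) (m s) :=
      mul_le_mul_of_nonneg_left (hslope.trans hdw) (hm s)
    have := hA4 s
    linarith
  have hCle : C ≤ θ' lambar := by
    rw [← hduality, hCeq]
    exact Finset.sum_le_sum fun s _ => by linarith [hkey s]
  -- Part 3
  obtain ⟨q, hqD, hqval⟩ := (hθ (fun e => ρ * lambar e)).1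
  obtain ⟨hqy0, hqx, hqbnd⟩ := hqD
  have hq3 : ∑ s, q.1 s * γ'bar s ≤ ρ * ∑ t, q.2 t * cost t := by
    have hA : ∑ t, q.2 t * γbar (σ t) ≤ ∑ t, q.2 t * cost t :=
      Finset.sum_le_sum fun t _ =>
        mul_le_mul_of_nonneg_left ((hγbar (σ t)).2 ⟨t, rfl, rfl⟩) (hqy0 t)
    have hB : ∑ t, q.2 t * γbar (σ t) = ∑ s, q.1 s * γbar s := by
      rw [group_sum' σ q.2 γbar]
      exact Finset.sum_congr rfl fun s _ => by rw [← hqx s]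
    have hC2 : ∑ s, q.1 s * γ'bar s ≤ ρ * ∑ s, q.1 s * γbar s := by
      rw [Finset.mul_sum]
      refine Finset.sum_le_sum fun s _ => ?_
      have hx0 : 0 ≤ q.1 s := le_trans (hm s) (hqbnd s).1
      have hgg : γ'bar s ≤ ρ * γbar s := by
        have h := (hγρ s).1
        rw [div_mul_eq_mul_div, div_le_iff₀ hρpos] at h
        rw [← hconv s]
        nlinarith [h]
      calc q.1 s * γ'bar s ≤ q.1 s * (ρ * γbar s) :=
            mul_le_mul_of_nonneg_left hgg hx0
        _ = ρ * (q.1 s * γbar s) := by ring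
    calc ∑ s, q.1 s * γ'bar s ≤ ρ * ∑ s, q.1 s * γbar s := hC2
      _ = ρ * ∑ t, q.2 t * γbar (σ t) := by rw [hB]
      _ ≤ ρ * ∑ t, q.2 t * cost t := by
          exact mul_le_mul_of_nonneg_left hA hρpos.le
  have h4 := hroute q.1 hqbnd
  have hθval : θ (fun e => ρ * lambar e)
      = ∑ s, U s (q.1 s) + ρ * C - ρ * ∑ t, q.2 t * cost t := by
    rw [hqval, hLval]
  have hfin : (ρ - 1) * C ≤ (ρ - 1) * θ' lambar :=
    mul_le_mul_of_nonneg_left hCle (by linarith)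
  rw [hθval]
  nlinarith [hq3, h4, hfin]
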